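/- If a matrix B with unit-norm columns has spark(B) ≤ n (i.e., some columns are dependent) and mutual coherence μ, then spark(B) ≥ 1 + 1/μ. -/
import Mathlib


open Matrix BigOperators

/-- `x` is `s`-sparse: it has at most `s` nonzero entries. -/
def Sparse {κ : Type*} (s : ℕ) (x : κ → ℝ) : Prop :=
  (Function.support x).ncard ≤ s

/-- `B` satisfies the `(s, δ)`-restricted isometry property. -/
def RIP {ι κ : Type*} [Fintype ι] [Fintype κ] (B : Matrix ι κ ℝ) (s : ℕ) (δ : ℝ) : Prop :=
  ∀ x : κ → ℝ, Sparse s x →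
    (1 - δ) * (∑ j, x j ^ 2) ≤ (∑ i, (B.mulVec x) i ^ 2) ∧
    (∑ i, (B.mulVec x) i ^ 2) ≤ (1 + δ) * (∑ j, x j ^ 2)


/-- The spark of B: the least number of nonzero entries of a nonzero kernel
vector, i.e. the size of the smallest linearly dependent set of columns. -/
noncomputable def spark {m n : ℕ} (B : Matrix (Fin m) (Fin n) ℝ) : ℕ :=
  sInf {k : ℕ | ∃ c : Fin n → ℝ, c ≠ 0 ∧ B.mulVec c = 0 ∧
    (Function.support c).ncard = k}

/-- For a matrix with unit-norm columns, coherence μ and some linearly dependent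
columns, spark(B) ≥ 1 + 1/μ. -/
theorem stmt7 {m n : ℕ} (B : Matrix (Fin m) (Fin n) ℝ) (μ : ℝ)
    (hunit : ∀ j : Fin n, ∑ i, (B i j) ^ 2 = 1)
    (hμ : ∀ j k : Fin n, j ≠ k → |∑ i, B i j * B i k| ≤ μ)
    (hdep : ∃ c : Fin n → ℝ, c ≠ 0 ∧ B.mulVec c = 0) :
    (1 : ℝ) + 1 / μ ≤ (spark B : ℝ) := by

  classical
  have hne : {k : ℕ | ∃ c : Fin n → ℝ, c ≠ 0 ∧ B.mulVec c = 0 ∧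
      (Function.support c).ncard = k}.Nonempty := by
    obtain ⟨c, hc, hbc⟩ := hdep
    exact ⟨_, c, hc, hbc, rfl⟩
  obtain ⟨c, hc0, hbc, hcard⟩ := Nat.sInf_mem hne
  have hfin : (Function.support c).Finite := Set.toFinite _
  set T : Finset (Fin n) := hfin.toFinset with hT
  have hcardT : (T.card : ℕ) = spark B := by
    unfold spark
    rw [← hcard, Set.ncard_eq_toFinset_card _ hfin]
  have hTne : T.Nonempty := by
    obtain ⟨i, hi⟩ := Function.ne_iff.mp hc0
    exact ⟨i, by simp only [hT, Set.Finite.mem_toFinset, Function.mem_support]; simpa using hi⟩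
  have hk1 : 1 ≤ T.card := Finset.card_pos.mpr hTne
  rcases le_or_gt μ 0 with hμ0 | hμ0
  · have h1 : 1 / μ ≤ 0 := one_div_nonpos.mpr hμ0
    have h2 : (1:ℝ) ≤ (spark B : ℝ) := by
      rw [← hcardT]; exact_mod_cast hk1
    linarith
  · obtain ⟨i, hiT, hmax⟩ := T.exists_max_image (fun j => |c j|) hTne
    have hci : c i ≠ 0 := by simpa [hT, Function.mem_support] using hiT
    have hzero : ∀ j, j ∉ T → c j = 0 := by
      intro j hj
      by_contra h
      exact hj (by simp [hT, Function.mem_support, h])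
    have h0 : ∀ i0, ∑ j, B i0 j * c j = 0 := by
      intro i0
      have := congrFun hbc i0
      simpa [Matrix.mulVec, dotProduct] using this
    have key : ∑ j, (∑ i0, B i0 i * B i0 j) * c j = 0 := by
      have hswap : ∑ j, (∑ i0, B i0 i * B i0 j) * c j
          = ∑ i0, B i0 i * ∑ j, B i0 j * c j := by
        simp only [Finset.sum_mul, Finset.mul_sum, mul_assoc]
        exact Finset.sum_comm
      rw [hswap]
      simp [h0]
    have keyT : ∑ j ∈ T, (∑ i0, B i0 i * B i0 j) * c j = 0 := by
      rw [← key]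
      refine Finset.sum_subset (Finset.subset_univ T) ?_
      intro j _ hj
      rw [hzero j hj, mul_zero]
    have hgi : ∑ i0, B i0 i * B i0 i = 1 := by
      rw [← hunit i]
      simp [sq]
    have hsplit : c i = -∑ j ∈ T.erase i, (∑ i0, B i0 i * B i0 j) * c j := by
      have := Finset.add_sum_erase T (fun j => (∑ i0, B i0 i * B i0 j) * c j) hiT
      rw [keyT] at this
      simp only [hgi, one_mul] at this
      linarith [this]
    have hbound : |c i| ≤ ((T.card : ℝ) - 1) * (μ * |c i|) := by
      calc |c i| = |∑ j ∈ T.erase i, (∑ i0, B i0 i * B i0 j) * c j| := by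
            rw [hsplit, abs_neg]
        _ ≤ ∑ j ∈ T.erase i, |(∑ i0, B i0 i * B i0 j) * c j| :=
            Finset.abs_sum_le_sum_abs _ _
        _ ≤ ∑ j ∈ T.erase i, μ * |c i| := by
            refine Finset.sum_le_sum ?_
            intro j hj
            rw [abs_mul]
            have hji : j ≠ i := (Finset.mem_erase.mp hj).1
            have hjT : j ∈ T := (Finset.mem_erase.mp hj).2
            exact mul_le_mul (hμ i j (Ne.symm hji)) (hmax j hjT) (abs_nonneg _)
              (le_of_lt hμ0)
        _ = ((T.erase i).card : ℝ) * (μ * |c i|) := by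
            rw [Finset.sum_const, nsmul_eq_mul]
        _ = ((T.card : ℝ) - 1) * (μ * |c i|) := by
            rw [Finset.card_erase_of_mem hiT]
            congr 1
            push_cast [Nat.cast_sub hk1]
            ring
    have hcipos : 0 < |c i| := abs_pos.mpr hci
    have h1 : 1 ≤ ((T.card : ℝ) - 1) * μ := by
      nlinarith
    have h2 : 1 / μ ≤ (T.card : ℝ) - 1 := (div_le_iff₀ hμ0).mpr h1
    have h3 : (T.card : ℝ) = (spark B : ℝ) := by exact_mod_cast hcardT
    linarith
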